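/- arXiv:2106.03811 — 3 statements merged into one kernel-verified Lean document; each statement's English description precedes it below -/
import Mathlib

section
/- Fix real numbers N, n with N ≥ n > 0, a number of strata s, and vectors φ, τ ∈ ℝ^s with all entries strictly positive. Let φ̄ = Σ_{j=1}^s φ_j τ_j and suppose the implicit equation N·τ_i·φ̄ − φ̄ − (N−n)·τ_i·φ_i = 0 holds for every i = 1,…,s. Then τ_i ≥ 1/N for every i; equivalently, every entry of the vector a = N·τ − 1 is nonnegative. -/
/-- Part of Lemma (diti): under the implicit equation (Inplicit),
`τ_i ≥ 1/N`, i.e. every entry of `a = N·τ − 1` is nonnegative. -/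
theorem a_entries_nonneg
    (N n : ℝ) (s : ℕ) (φ τ : Fin s → ℝ)
    (hNn : n ≤ N) (hn : 0 < n)
    (hφ : ∀ i, 0 < φ i) (hτ : ∀ i, 0 < τ i)
    (himpl : ∀ i, N * τ i * (∑ j, φ j * τ j) - (∑ j, φ j * τ j)
      - (N - n) * τ i * φ i = 0) :
    ∀ i, 1 / N ≤ τ i ∧ 0 ≤ N * τ i - 1 := by
  intro i
  have hN : 0 < N := lt_of_lt_of_le hn hNn
  have hbar : 0 < ∑ j, φ j * τ j := by
    apply Finset.sum_pos
    · intro j _; exact mul_pos (hφ j) (hτ j)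
    · exact ⟨i, Finset.mem_univ i⟩
  have hkey : (∑ j, φ j * τ j) * (N * τ i - 1) = (N - n) * τ i * φ i := by
    have := himpl i; ring_nf; ring_nf at this; linarith
  have hrhs : 0 ≤ (N - n) * τ i * φ i :=
    mul_nonneg (mul_nonneg (by linarith) (hτ i).le) (hφ i).le
  have h2 : 0 ≤ N * τ i - 1 := by
    nlinarith [hkey, hrhs, hbar]
  constructor
  · rw [div_le_iff₀ hN]; linarith [h2]
  · exact h2
end

section
/- Fix real numbers N > n > 0 and s ≥ 1, and define F : ℝ^s × ℝ^s → ℝ^s by F(φ,τ)_i = N·τ_i·(Σ_j φ_j τ_j) − (Σ_j φ_j τ_j) − (N−n)·τ_i·φ_i. Suppose (φ₀, τ₀) has all entries strictly positive and F(φ₀, τ₀) = 0. Then there exist a neighborhood U of φ₀ in ℝ^s and a continuously differentiable map g : U → ℝ^s such that g(φ₀) = τ₀ and F(φ, g(φ)) = 0 for all φ ∈ U; moreover g is locally unique, i.e. there is a neighborhood W of (φ₀, τ₀) such that any (φ,τ) ∈ W with F(φ,τ) = 0 satisfies τ = g(φ). -/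
/-- Proposition 1 via the Implicit Function Theorem: near a strictly positive
solution `(φ₀, τ₀)` of the implicit likelihood equation `F(φ,τ) = 0`, the
weight vector `τ` is a locally unique, continuously differentiable function
of `φ`. -/
theorem tau_implicit_function_of_phi
    (N n : ℝ) (hn : 0 < n) (hNn : n < N) (s : ℕ) (hs : 1 ≤ s)
    (F : (Fin s → ℝ) × (Fin s → ℝ) → (Fin s → ℝ))
    (hF : ∀ φ τ : Fin s → ℝ, ∀ i,
      F (φ, τ) i = N * τ i * (∑ j, φ j * τ j) - (∑ j, φ j * τ j)
        - (N - n) * τ i * φ i)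
    (φ₀ τ₀ : Fin s → ℝ)
    (hφ₀ : ∀ i, 0 < φ₀ i) (hτ₀ : ∀ i, 0 < τ₀ i)
    (hzero : F (φ₀, τ₀) = 0) :
    ∃ (U : Set (Fin s → ℝ)) (g : (Fin s → ℝ) → (Fin s → ℝ)),
      IsOpen U ∧ φ₀ ∈ U ∧ ContDiffOn ℝ 1 g U ∧ g φ₀ = τ₀ ∧
      (∀ φ ∈ U, F (φ, g φ) = 0) ∧
      ∃ W ∈ nhds (φ₀, τ₀), ∀ p ∈ W, F p = 0 → p.2 = g p.1 := by
  classical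
  have hFeq : F = fun p : ((Fin s → ℝ) × (Fin s → ℝ)) => fun i =>
      N * p.2 i * (∑ j, p.1 j * p.2 j) - (∑ j, p.1 j * p.2 j)
        - (N - n) * p.2 i * p.1 i := by
    funext p i; exact hF p.1 p.2 i
  -- basic positivity
  haveI : Nonempty (Fin s) := ⟨⟨0, hs⟩⟩
  have hS₀ : 0 < ∑ j, φ₀ j * τ₀ j :=
    Finset.sum_pos (fun j _ => mul_pos (hφ₀ j) (hτ₀ j)) Finset.univ_nonempty
  set S₀ : ℝ := ∑ j, φ₀ j * τ₀ j with hS₀def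
  have hQ : 0 < ∑ j, φ₀ j * τ₀ j * τ₀ j :=
    Finset.sum_pos (fun j _ => mul_pos (mul_pos (hφ₀ j) (hτ₀ j)) (hτ₀ j)) Finset.univ_nonempty
  set p₀ : ((Fin s → ℝ) × (Fin s → ℝ)) := (φ₀, τ₀) with hp₀
  -- projections
  set pu : Fin s → (((Fin s → ℝ) × (Fin s → ℝ)) →L[ℝ] ℝ) := fun i =>
    (ContinuousLinearMap.proj i).comp (ContinuousLinearMap.fst ℝ (Fin s → ℝ) (Fin s → ℝ)) with hpu_def
  set pv : Fin s → (((Fin s → ℝ) × (Fin s → ℝ)) →L[ℝ] ℝ) := fun i =>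
    (ContinuousLinearMap.proj i).comp (ContinuousLinearMap.snd ℝ (Fin s → ℝ) (Fin s → ℝ)) with hpv_def
  have hpu : ∀ i, HasFDerivAt (fun p : ((Fin s → ℝ) × (Fin s → ℝ)) => p.1 i) (pu i) p₀ := fun i => (pu i).hasFDerivAt
  have hpv : ∀ i, HasFDerivAt (fun p : ((Fin s → ℝ) × (Fin s → ℝ)) => p.2 i) (pv i) p₀ := fun i => (pv i).hasFDerivAt
  set T' : ((Fin s → ℝ) × (Fin s → ℝ)) →L[ℝ] ℝ := ∑ j, (φ₀ j • pv j + τ₀ j • pu j) with hT'def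
  have hS : HasFDerivAt (fun p : ((Fin s → ℝ) × (Fin s → ℝ)) => ∑ j, p.1 j * p.2 j) T' p₀ :=
    HasFDerivAt.fun_sum (fun j _ => (hpu j).mul (hpv j))
  set D : Fin s → (((Fin s → ℝ) × (Fin s → ℝ)) →L[ℝ] ℝ) := fun i =>
    ((N * τ₀ i) • T' + S₀ • (N • pv i)) - T'
      - (((N - n) * τ₀ i) • pu i + φ₀ i • ((N - n) • pv i)) with hDdef
  have hD : ∀ i, HasFDerivAt
      (fun p : ((Fin s → ℝ) × (Fin s → ℝ)) => N * p.2 i * (∑ j, p.1 j * p.2 j) - (∑ j, p.1 j * p.2 j)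
        - (N - n) * p.2 i * p.1 i) (D i) p₀ :=
    fun i => ((((hpv i).const_mul N).mul hS).sub hS).sub (((hpv i).const_mul (N - n)).mul (hpu i))
  have hDF : HasFDerivAt F (ContinuousLinearMap.pi D) p₀ := by
    rw [hFeq]; exact hasFDerivAt_pi.2 hD
  set A : ((Fin s → ℝ) × (Fin s → ℝ)) →L[ℝ] ((Fin s → ℝ) × (Fin s → ℝ)) :=
    (ContinuousLinearMap.fst ℝ (Fin s → ℝ) (Fin s → ℝ)).prod (ContinuousLinearMap.pi D) with hAdef
  set Φ : ((Fin s → ℝ) × (Fin s → ℝ)) → ((Fin s → ℝ) × (Fin s → ℝ)) := fun p => (p.1, F p) with hΦdef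
  have hA : HasFDerivAt Φ A p₀ := HasFDerivAt.prodMk hasFDerivAt_fst hDF
  -- evaluation of T' and D
  have hT'app : ∀ w : (Fin s → ℝ) × (Fin s → ℝ), T' w = ∑ j, (φ₀ j * w.2 j + τ₀ j * w.1 j) := by
    intro w
    simp [hT'def, hpu_def, hpv_def, ContinuousLinearMap.sum_apply, ContinuousLinearMap.coe_fst', ContinuousLinearMap.coe_snd']
  have hDapp : ∀ i, ∀ w : (Fin s → ℝ) × (Fin s → ℝ), D i w =
      (N * τ₀ i) * T' w + S₀ * (N * w.2 i) - T' w
        - ((N - n) * τ₀ i * w.1 i + φ₀ i * ((N - n) * w.2 i)) := by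
    intro i w
    simp [hDdef, hpu_def, hpv_def, ContinuousLinearMap.coe_fst', ContinuousLinearMap.coe_snd']
  -- injectivity of A
  have hzero' : ∀ i, N * τ₀ i * S₀ - S₀ - (N - n) * τ₀ i * φ₀ i = 0 := by
    intro i
    have := congrFun hzero i
    rw [hF φ₀ τ₀ i] at this
    simpa [hS₀def] using this
  have hinj : Function.Injective A := by
    have hker : ∀ w : (Fin s → ℝ) × (Fin s → ℝ), A w = 0 → w = 0 := by
      intro w hw
      have h1 : w.1 = 0 := congrArg Prod.fst hw
      have h2 : ∀ i, D i w = 0 := fun i => congrFun (congrArg Prod.snd hw) i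
      set T : ℝ := ∑ j, φ₀ j * w.2 j with hTdef
      have hT'w : T' w = T := by
        rw [hT'app, hTdef]
        exact Finset.sum_congr rfl fun j _ => by rw [h1]; simp
      have key : ∀ i, S₀ * w.2 i = τ₀ i * (1 - N * τ₀ i) * T := by
        intro i
        have hi := h2 i
        rw [hDapp i w, hT'w, h1] at hi
        simp only [Pi.zero_apply, mul_zero] at hi
        linear_combination τ₀ i * hi - w.2 i * hzero' i
      have hTeq : S₀ * T = T * (S₀ - N * ∑ j, φ₀ j * τ₀ j * τ₀ j) := by
        calc S₀ * T = ∑ j, φ₀ j * (S₀ * w.2 j) := by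
              rw [hTdef, Finset.mul_sum]
              exact Finset.sum_congr rfl fun j _ => by ring
          _ = ∑ j, φ₀ j * (τ₀ j * (1 - N * τ₀ j) * T) :=
              Finset.sum_congr rfl fun j _ => by rw [key j]
          _ = ∑ j, (φ₀ j * τ₀ j * T - (φ₀ j * τ₀ j * τ₀ j) * (N * T)) :=
              Finset.sum_congr rfl fun j _ => by ring
          _ = (∑ j, φ₀ j * τ₀ j) * T - (∑ j, φ₀ j * τ₀ j * τ₀ j) * (N * T) := by
              rw [Finset.sum_sub_distrib, Finset.sum_mul, Finset.sum_mul]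
          _ = T * (S₀ - N * ∑ j, φ₀ j * τ₀ j * τ₀ j) := by rw [hS₀def]; ring
      have hT0 : T = 0 := by
        have : T * (N * ∑ j, φ₀ j * τ₀ j * τ₀ j) = 0 := by linarith [hTeq]
        rcases mul_eq_zero.1 this with h | h
        · exact h
        · exact absurd h (ne_of_gt (mul_pos (hn.trans hNn) hQ))
      have hv : w.2 = 0 := by
        funext i
        have := key i
        rw [hT0, mul_zero] at this
        have := mul_eq_zero.1 this
        rcases this with h | h
        · exact absurd h (ne_of_gt hS₀)
        · exact h
      exact Prod.ext h1 hv
    intro a b hab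
    have : A (a - b) = 0 := by rw [map_sub, hab, sub_self]
    have := hker _ this
    exact sub_eq_zero.1 this
  have hsurj : Function.Surjective A.toLinearMap :=
    LinearMap.injective_iff_surjective.1 hinj
  set eA : ((Fin s → ℝ) × (Fin s → ℝ)) ≃L[ℝ] ((Fin s → ℝ) × (Fin s → ℝ)) :=
    (LinearEquiv.ofBijective A.toLinearMap ⟨hinj, hsurj⟩).toContinuousLinearEquiv with heAdef
  have hA' : HasFDerivAt Φ (eA : ((Fin s → ℝ) × (Fin s → ℝ)) →L[ℝ] ((Fin s → ℝ) × (Fin s → ℝ))) p₀ := by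
    refine hA.congr_fderiv ?_
    apply ContinuousLinearMap.coe_injective
    rfl
  -- smoothness of Φ
  have hΦsm : ContDiff ℝ 1 Φ := by
    rw [hΦdef, hFeq]
    apply ContDiff.prodMk contDiff_fst
    apply contDiff_pi.2
    intro i
    have hSsm : ContDiff ℝ 1 (fun p : ((Fin s → ℝ) × (Fin s → ℝ)) => ∑ j, p.1 j * p.2 j) :=
      ContDiff.sum fun j _ =>
        ((contDiff_apply ℝ ℝ j).comp contDiff_fst).mul ((contDiff_apply ℝ ℝ j).comp contDiff_snd)
    exact (((contDiff_const.mul ((contDiff_apply ℝ ℝ i).comp contDiff_snd)).mul hSsm).sub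
      hSsm).sub ((contDiff_const.mul ((contDiff_apply ℝ ℝ i).comp contDiff_snd)).mul
        ((contDiff_apply ℝ ℝ i).comp contDiff_fst))
  have hΦat : ContDiffAt ℝ 1 Φ p₀ := hΦsm.contDiffAt
  -- local inverse
  have hn1 : (1 : WithTop ℕ∞) ≤ 1 := le_rfl
  set ψ : ((Fin s → ℝ) × (Fin s → ℝ)) → ((Fin s → ℝ) × (Fin s → ℝ)) := hΦat.localInverse hA' one_ne_zero with hψdef
  have hψsm : ContDiffAt ℝ 1 ψ (Φ p₀) := hΦat.to_localInverse hA' one_ne_zero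
  set hstrict := hΦat.hasStrictFDerivAt' hA' one_ne_zero with hstrictdef
  have hri : ∀ᶠ y in nhds (Φ p₀), Φ (ψ y) = y := hstrict.eventually_right_inverse
  have hli : ∀ᶠ x in nhds p₀, ψ (Φ x) = x := hstrict.eventually_left_inverse
  have hΦp₀ : Φ p₀ = (φ₀, (0 : Fin s → ℝ)) := by
    rw [hΦdef]; exact Prod.ext rfl hzero
  set g : (Fin s → ℝ) → (Fin s → ℝ) := fun φ => (ψ (φ, 0)).2 with hgdef
  have hgφ₀ : g φ₀ = τ₀ := by
    have : ψ (φ₀, 0) = p₀ := by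
      rw [← hΦp₀]
      exact hstrict.localInverse_apply_image
    rw [hgdef]; simp only [this]; rfl
  -- smoothness of g near φ₀
  have hgsm : ContDiffAt ℝ 1 g φ₀ := by
    have h1 : ContDiffAt ℝ 1 (fun φ : Fin s → ℝ => ((φ, (0 : Fin s → ℝ)) : (Fin s → ℝ) × (Fin s → ℝ))) φ₀ :=
      (ContDiff.prodMk contDiff_id contDiff_const).contDiffAt
    have hψsm' : ContDiffAt ℝ 1 ψ ((φ₀, 0) : (Fin s → ℝ) × (Fin s → ℝ)) := hΦp₀ ▸ hψsm
    have h2 : ContDiffAt ℝ 1 (fun φ : Fin s → ℝ => ψ (φ, 0)) φ₀ := hψsm'.comp φ₀ h1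
    exact contDiff_snd.contDiffAt.comp φ₀ h2
  obtain ⟨u, hu_mem, hu⟩ := hgsm.contDiffOn hn1 (by simp)
  -- neighborhood where Φ ∘ ψ = id along φ ↦ (φ,0)
  have hri' : ∀ᶠ φ in nhds φ₀, Φ (ψ (φ, 0)) = (φ, 0) := by
    have hc : ContinuousAt (fun φ : Fin s → ℝ => ((φ, (0 : Fin s → ℝ)) : (Fin s → ℝ) × (Fin s → ℝ))) φ₀ :=
      (continuous_id.prodMk continuous_const).continuousAt
    have := hc.tendsto
    rw [show ((φ₀, (0 : Fin s → ℝ)) : (Fin s → ℝ) × (Fin s → ℝ)) = Φ p₀ from hΦp₀.symm] at this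
    exact this.eventually hri
  obtain ⟨u', hu'_mem, hu'⟩ := Filter.eventually_iff_exists_mem.1 hri'
  refine ⟨interior u ∩ interior u', g, isOpen_interior.inter isOpen_interior,
    ⟨mem_interior_iff_mem_nhds.2 hu_mem, mem_interior_iff_mem_nhds.2 hu'_mem⟩,
    hu.mono (Set.inter_subset_left.trans interior_subset), hgφ₀, ?_, ?_⟩
  · intro φ hφ
    have h := hu' φ (interior_subset hφ.2)
    have h1 : (ψ (φ, 0)).1 = φ := congrArg Prod.fst h
    have h2 : F (ψ (φ, 0)) = 0 := congrArg Prod.snd h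
    have : ψ (φ, 0) = (φ, g φ) := Prod.ext h1 rfl
    rw [← this, h2]
  · refine ⟨{x | ψ (Φ x) = x}, hli, ?_⟩
    intro p hp hFp
    have hΦp : Φ p = (p.1, (0 : Fin s → ℝ)) := by
      rw [hΦdef]; exact Prod.ext rfl hFp
    have : ψ (p.1, (0 : Fin s → ℝ)) = p := by rw [← hΦp]; exact hp
    rw [hgdef]
    simp only [this]
end

section
/- Let (Ω, μ) be a probability space, let u : Ω → ℝ^k be integrable with E[u] = c·1 for some real constant c, and let f : ℝ^m → ℝ^k be twice differentiable at β with Σ_{j=1}^k f_j(y) = 1 for all y in a neighborhood of β. Then for all h, j, E[⟨∂²f/∂β_h∂β_j (β), u⟩] = 0, where ∂²f/∂β_h∂β_j (β) ∈ ℝ^k is the vector of second partial derivatives of the coordinates of f. -/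
open MeasureTheory

/-- Part (ii) of Lemma FInf: if `E[u] = c·1` and the coordinates of `f`
sum to one near `β`, then the expectation of the inner product of any
second partial derivative of `f` with `u` vanishes. -/
theorem expectation_second_derivative_inner_eq_zero
    (m k : ℕ) (Ω : Type*) [MeasurableSpace Ω] (μ : Measure Ω)
    [IsProbabilityMeasure μ]
    (u : Ω → (Fin k → ℝ)) (hu : Integrable u μ)
    (c : ℝ) (hmean : ∀ l, ∫ ω, u ω l ∂μ = c)
    (f : (Fin m → ℝ) → (Fin k → ℝ)) (β : Fin m → ℝ)
    (hf : ∀ᶠ y in nhds β, DifferentiableAt ℝ f y)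
    (hf2 : DifferentiableAt ℝ (fderiv ℝ f) β)
    (hsum : ∀ᶠ y in nhds β, ∑ j, f y j = 1) :
    ∀ h j : Fin m,
      ∫ ω, ∑ l, fderiv ℝ (fderiv ℝ f) β (Pi.single h 1) (Pi.single j 1) l
        * u ω l ∂μ = 0 := by
  intro h j
  set sumL : (Fin k → ℝ) →L[ℝ] ℝ := ∑ i, ContinuousLinearMap.proj i with hsumL
  have hsum_apply : ∀ v : Fin k → ℝ, sumL v = ∑ i, v i := by
    intro v; simp [hsumL, ContinuousLinearMap.sum_apply]
  -- g sums coordinates of f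
  set g : (Fin m → ℝ) → ℝ := fun y => sumL (f y) with hg
  have hgc : g =ᶠ[nhds β] fun _ => (1 : ℝ) := by
    filter_upwards [hsum] with y hy
    simp [hg, hsum_apply, hy]
  -- fderiv g = sumL ∘ fderiv f eventually
  have hdg : fderiv ℝ g =ᶠ[nhds β] fun y => sumL.comp (fderiv ℝ f y) := by
    filter_upwards [hf] with y hy
    exact (sumL.hasFDerivAt.comp y hy.hasFDerivAt).fderiv
  -- fderiv g = 0 eventually
  have hdg0 : fderiv ℝ g =ᶠ[nhds β] fun _ => (0 : (Fin m → ℝ) →L[ℝ] ℝ) := by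
    have := hgc.fderiv (𝕜 := ℝ)
    filter_upwards [this] with y hy
    simpa [fderiv_const] using hy
  -- second derivative of g at β is zero
  have h2g0 : fderiv ℝ (fderiv ℝ g) β = 0 := by
    rw [hdg0.fderiv_eq]
    exact fderiv_const_apply _
  -- second derivative of g via f
  have h2g : fderiv ℝ (fderiv ℝ g) β
      = (ContinuousLinearMap.compL ℝ (Fin m → ℝ) (Fin k → ℝ) ℝ sumL).comp
          (fderiv ℝ (fderiv ℝ f) β) := by
    rw [hdg.fderiv_eq]
    exact ((ContinuousLinearMap.compL ℝ (Fin m → ℝ) (Fin k → ℝ) ℝ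
      sumL).hasFDerivAt.comp β hf2.hasFDerivAt).fderiv
  have hkey : ∑ l, fderiv ℝ (fderiv ℝ f) β (Pi.single h 1) (Pi.single j 1) l = 0 := by
    have := congrArg (fun T : ((Fin m → ℝ) →L[ℝ] ((Fin m → ℝ) →L[ℝ] ℝ)) =>
      T (Pi.single h 1) (Pi.single j 1)) (h2g0.symm.trans h2g)
    simpa [hsum_apply] using this.symm
  have hul : ∀ l : Fin k, Integrable (fun ω => u ω l) μ := fun l =>
    (ContinuousLinearMap.proj (R := ℝ) (φ := fun _ : Fin k => ℝ) l).integrable_comp hu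
  calc ∫ ω, ∑ l, fderiv ℝ (fderiv ℝ f) β (Pi.single h 1) (Pi.single j 1) l * u ω l ∂μ
      = ∑ l, ∫ ω, fderiv ℝ (fderiv ℝ f) β (Pi.single h 1) (Pi.single j 1) l * u ω l ∂μ := by
        exact integral_finset_sum _ fun l _ => (hul l).const_mul _
    _ = ∑ l, fderiv ℝ (fderiv ℝ f) β (Pi.single h 1) (Pi.single j 1) l * c := by
        refine Finset.sum_congr rfl fun l _ => ?_
        rw [integral_const_mul, hmean l]
    _ = (∑ l, fderiv ℝ (fderiv ℝ f) β (Pi.single h 1) (Pi.single j 1) l) * c := by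
        rw [Finset.sum_mul]
    _ = 0 := by rw [hkey, zero_mul]
end
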